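/- If 𝒰 ∈ 𝒩ₙ, then ℱ(𝒰) ∈ 𝒩ₙ₊₁; consequently the fixed point ℰ of ℱ (which exists by the Banach fixed-point theorem) satisfies ℰ ∈ 𝒩ₙ for every n, i.e., ℰ maps every ∞-proof of Grz∞+cut to a cut-free ∞-proof of the same sequent. -/

import Mathlib

/-- Modal formulas of the Grzegorczyk logic: ⊥, atoms, →, □. -/
inductive Formula : Type
  | bot : Formula
  | atom : ℕ → Formula
  | imp : Formula → Formula → Formula
  | box : Formula → Formula
deriving DecidableEq

/-- A sequent Γ ⇒ Δ is a pair of finite multisets of formulas. -/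
abbrev Sequent : Type := Multiset Formula × Multiset Formula

/-- Names of the inference rules of Grz∞ + cut (including the two kinds of initial sequents). -/
inductive Rule : Type
  | ax | axBot | impL | impR | refl | box | cut
deriving DecidableEq

/-- □Π for a multiset Π. -/
def boxed (P : Multiset Formula) : Multiset Formula := P.map Formula.box

/-- `Inst r s p₁ p₂` : the rule `r` has a (correct) instance with conclusion `s`,
first premise `p₁` and second premise `p₂` (`none` = no such premise). -/
inductive Inst : Rule → Sequent → Option Sequent → Option Sequent → Prop
  | ax (Γ Δ : Multiset Formula) (p : ℕ) :
      Inst .ax (Formula.atom p ::ₘ Γ, Formula.atom p ::ₘ Δ) none none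
  | axBot (Γ Δ : Multiset Formula) :
      Inst .axBot (Formula.bot ::ₘ Γ, Δ) none none
  | impL (Γ Δ : Multiset Formula) (A B : Formula) :
      Inst .impL (Formula.imp A B ::ₘ Γ, Δ) (some (B ::ₘ Γ, Δ)) (some (Γ, A ::ₘ Δ))
  | impR (Γ Δ : Multiset Formula) (A B : Formula) :
      Inst .impR (Γ, Formula.imp A B ::ₘ Δ) (some (A ::ₘ Γ, B ::ₘ Δ)) none
  | refl (Γ Δ : Multiset Formula) (A : Formula) :
      Inst .refl (Formula.box A ::ₘ Γ, Δ) (some (A ::ₘ Formula.box A ::ₘ Γ, Δ)) none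
  | box (Γ Δ : Multiset Formula) (A : Formula) (P : Multiset Formula) :
      Inst .box (Γ + boxed P, Formula.box A ::ₘ Δ) (some (Γ + boxed P, A ::ₘ Δ))
        (some (boxed P, {A}))
  | cut (Γ Δ : Multiset Formula) (A : Formula) :
      Inst .cut (Γ, Δ) (some (Γ, A ::ₘ Δ)) (some (A ::ₘ Γ, Δ))

/-- A labelling of tree addresses (lists of booleans; `true` = second/right child)
by a rule name together with a sequent; `none` means the address is outside the tree. -/
abbrev Lab : Type := List Bool → Option (Rule × Sequent)

/-- The labelling of the subtree at child `i`. -/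
def shift (i : Bool) (l : Lab) : Lab := fun a => l (i :: a)

/-- An ∞-proof in Grz∞ + cut: a possibly infinite tree of sequents built according to
the rules, in which every infinite branch passes through the right premise of the
rule (□) infinitely many times. -/
structure InfProof : Type where
  lab : Lab
  root_some : (lab []).isSome
  nojunk : ∀ (a : List Bool) (i : Bool), lab a = none → lab (a ++ [i]) = none
  step : ∀ (a : List Bool) (r : Rule) (s : Sequent), lab a = some (r, s) →
      Inst r s ((lab (a ++ [false])).map Prod.snd) ((lab (a ++ [true])).map Prod.snd)
  branch : ∀ f : ℕ → Bool, (∀ n : ℕ, (lab ((List.range n).map f)).isSome) →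
      ∀ N : ℕ, ∃ n : ℕ, N ≤ n ∧ f n = true ∧
        (lab ((List.range n).map f)).map Prod.fst = some Rule.box

/-- The sequent at the root of an ∞-proof. -/
def rootSeq (π : InfProof) : Sequent := ((π.lab []).map Prod.snd).getD (0, 0)

/-- `Proves π S` : the ∞-proof `π` is an ∞-proof of the sequent `S`. -/
def Proves (π : InfProof) (S : Sequent) : Prop := ∃ r : Rule, π.lab [] = some (r, S)

/-- An ∞-proof contains no application of the cut rule (i.e. it is a proof of Grz∞). -/
def NoCut (π : InfProof) : Prop := ∀ (a : List Bool) (r : Rule) (s : Sequent),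
  π.lab a = some (r, s) → r ≠ Rule.cut

/-- Membership of an address in the main fragment: no proper passage through a
right premise of (□) strictly below it. -/
def InMain (l : Lab) (a : List Bool) : Prop :=
  (l a).isSome ∧ ∀ (b c : List Bool), a = b ++ true :: c →
    (l b).map Prod.fst = some Rule.box → c = []

/-- The local height |π| : the length of the longest branch in the main fragment. -/
noncomputable def height (l : Lab) : ℕ := sSup {n : ℕ | ∃ a : List Bool, InMain l a ∧ a.length = n}

/-- The relations ∼ₙ on ∞-proofs (presented on labellings), defined inductively:
π ∼₀ τ always; a single-node proof is ∼ₙ-related to itself; proofs ending in the same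
instance of (→L), (cut), (→R), (refl) are ∼ₙ-related when their immediate subproofs are;
proofs ending in the same instance of (□) are ∼ₙ₊₁-related when the left-premise subproofs
are ∼ₙ₊₁-related and the right-premise subproofs are ∼ₙ-related. -/
inductive Sim : ℕ → Lab → Lab → Prop
  | zero (l m : Lab) : Sim 0 l m
  | leaf (n : ℕ) (l : Lab) : height l = 0 → Sim n l l
  | bin (n : ℕ) (l m : Lab) (r : Rule) (s : Sequent) :
      (r = Rule.impL ∨ r = Rule.cut) →
      l [] = some (r, s) → m [] = some (r, s) →
      (l [false]).map Prod.snd = (m [false]).map Prod.snd →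
      (l [true]).map Prod.snd = (m [true]).map Prod.snd →
      Sim n (shift false l) (shift false m) → Sim n (shift true l) (shift true m) →
      Sim n l m
  | un (n : ℕ) (l m : Lab) (r : Rule) (s : Sequent) :
      (r = Rule.impR ∨ r = Rule.refl) →
      l [] = some (r, s) → m [] = some (r, s) →
      (l [false]).map Prod.snd = (m [false]).map Prod.snd →
      Sim n (shift false l) (shift false m) →
      Sim n l m
  | box (n : ℕ) (l m : Lab) (s : Sequent) :
      l [] = some (Rule.box, s) → m [] = some (Rule.box, s) →
      (l [false]).map Prod.snd = (m [false]).map Prod.snd →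
      (l [true]).map Prod.snd = (m [true]).map Prod.snd →
      Sim (n + 1) (shift false l) (shift false m) → Sim n (shift true l) (shift true m) →
      Sim (n + 1) l m

/-- The sets 𝒫ₙ of ∞-proofs (presented on labellings), defined inductively:
𝒫₀ is everything; single-node proofs are in every 𝒫ₙ; (→L), (→R), (refl) preserve
membership in 𝒫ₙ; a proof ending in (□) with left-premise subproof in 𝒫ₙ₊₁ and
right-premise subproof in 𝒫ₙ is in 𝒫ₙ₊₁. -/
inductive MemP : ℕ → Lab → Prop
  | zero (l : Lab) : MemP 0 l
  | leaf (n : ℕ) (l : Lab) : height l = 0 → MemP n l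
  | bin (n : ℕ) (l : Lab) (s : Sequent) :
      l [] = some (Rule.impL, s) →
      MemP n (shift false l) → MemP n (shift true l) → MemP n l
  | un (n : ℕ) (l : Lab) (r : Rule) (s : Sequent) :
      (r = Rule.impR ∨ r = Rule.refl) →
      l [] = some (r, s) → MemP n (shift false l) → MemP n l
  | box (n : ℕ) (l : Lab) (s : Sequent) :
      l [] = some (Rule.box, s) →
      MemP (n + 1) (shift false l) → MemP n (shift true l) → MemP (n + 1) l

/- The metric d(π,τ) = 2^(−sup{n : π ∼ₙ τ}), with 2^(−∞) = 0. -/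
open Classical in
noncomputable def pdist (π τ : InfProof) : ℝ :=
  if ∀ n : ℕ, Sim n π.lab τ.lab then 0
  else (2 : ℝ) ^ (-((sSup {n : ℕ | Sim n π.lab τ.lab} : ℕ) : ℤ))

/-- A mapping on ∞-proofs is nonexpansive if it preserves all relations ∼ₙ. -/
def Nonexpansive (f : InfProof → InfProof) : Prop :=
  ∀ (n : ℕ) (π τ : InfProof), Sim n π.lab τ.lab → Sim n (f π).lab (f τ).lab

/-- A mapping is adequate if it is nonexpansive, maps 𝒫₁ into 𝒫₁,
and does not increase local height. -/
def Adequate (f : InfProof → InfProof) : Prop :=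
  Nonexpansive f ∧ (∀ π : InfProof, MemP 1 π.lab → MemP 1 (f π).lab) ∧
    ∀ π : InfProof, height (f π).lab ≤ height π.lab

/-- The set 𝒫₁ of ∞-proofs whose main fragment is cut-free, as a subtype. -/
abbrev P1 : Type := {π : InfProof // MemP 1 π.lab}

/-- An A-reducing mapping: a nonexpansive map ℛ : 𝒫₁ × 𝒫₁ → 𝒫₁ such that
ℛ(π′,π″) proves Γ ⇒ Δ whenever π′ proves Γ ⇒ Δ, A and π″ proves A, Γ ⇒ Δ. -/
def Reducing (A : Formula) (R : P1 → P1 → P1) : Prop :=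
  (∀ (n : ℕ) (p₁ p₂ q₁ q₂ : P1), Sim n p₁.1.lab q₁.1.lab → Sim n p₂.1.lab q₂.1.lab →
      Sim n (R p₁ p₂).1.lab (R q₁ q₂).1.lab) ∧
  ∀ (p₁ p₂ : P1) (Γ Δ : Multiset Formula),
    Proves p₁.1 (Γ, A ::ₘ Δ) → Proves p₂.1 (A ::ₘ Γ, Δ) → Proves (R p₁ p₂).1 (Γ, Δ)

/-- A mapping is root-preserving if it maps ∞-proofs to ∞-proofs of the same sequent. -/
def RootPres (f : InfProof → InfProof) : Prop :=
  ∀ (π : InfProof) (S : Sequent), Proves π S → Proves (f π) S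

/-- The uniform distance on mappings of ∞-proofs. -/
noncomputable def udist (U V : InfProof → InfProof) : ℝ :=
  ⨆ π : InfProof, pdist (U π) (V π)

/- The immediate subproof of `π` at child `i` (junk value `π` if there is none). -/
open Classical in
noncomputable def subtree (π : InfProof) (i : Bool) : InfProof :=
  if h : ∃ τ : InfProof, τ.lab = shift i π.lab then h.choose else π

/-- `IsFOp E F` : `F` is the operator ℱ (relative to the one-step cut-elimination map
`E` = ℰ*) defined by: on proofs with cut-free main fragment it commutes with the last
rule, applying `U` at right premises of (□) and fixing single-node proofs; on other
proofs it first applies `E`. -/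
def IsFOp (E : InfProof → InfProof) (F : (InfProof → InfProof) → InfProof → InfProof) : Prop :=
  ∀ (U : InfProof → InfProof) (π : InfProof),
    (MemP 1 π.lab → height π.lab = 0 → F U π = π) ∧
    (∀ (r : Rule) (s : Sequent), MemP 1 π.lab → π.lab [] = some (r, s) →
        r ≠ Rule.box → r ≠ Rule.cut → height π.lab ≠ 0 →
        (F U π).lab [] = some (r, s) ∧
        shift false (F U π).lab = (F U (subtree π false)).lab ∧
        (r = Rule.impL → shift true (F U π).lab = (F U (subtree π true)).lab)) ∧
    (∀ s : Sequent, MemP 1 π.lab → π.lab [] = some (Rule.box, s) →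
        (F U π).lab [] = some (Rule.box, s) ∧
        shift false (F U π).lab = (F U (subtree π false)).lab ∧
        shift true (F U π).lab = (U (subtree π true)).lab) ∧
    (¬ MemP 1 π.lab → F U π = F U (E π))

/-- Membership in 𝒩ₙ : a root-preserving nonexpansive map whose image lies in 𝒫ₙ. -/
def InN (n : ℕ) (U : InfProof → InfProof) : Prop :=
  Nonexpansive U ∧ RootPres U ∧ ∀ π : InfProof, MemP n (U π).lab

/-- The finitary sequent calculus Grz_Seq (with cut allowed iff the flag is `true`). -/
inductive GrzSeq : Bool → Sequent → Prop
  | ax (c : Bool) (Γ Δ : Multiset Formula) (A : Formula) :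
      GrzSeq c (A ::ₘ Γ, A ::ₘ Δ)
  | bot (c : Bool) (Γ Δ : Multiset Formula) :
      GrzSeq c (Formula.bot ::ₘ Γ, Δ)
  | impL (c : Bool) (Γ Δ : Multiset Formula) (A B : Formula) :
      GrzSeq c (B ::ₘ Γ, Δ) → GrzSeq c (Γ, A ::ₘ Δ) →
      GrzSeq c (Formula.imp A B ::ₘ Γ, Δ)
  | impR (c : Bool) (Γ Δ : Multiset Formula) (A B : Formula) :
      GrzSeq c (A ::ₘ Γ, B ::ₘ Δ) → GrzSeq c (Γ, Formula.imp A B ::ₘ Δ)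
  | refl (c : Bool) (Γ Δ : Multiset Formula) (B : Formula) :
      GrzSeq c (B ::ₘ Formula.box B ::ₘ Γ, Δ) → GrzSeq c (Formula.box B ::ₘ Γ, Δ)
  | grz (c : Bool) (Γ Δ : Multiset Formula) (A : Formula) (P : Multiset Formula) :
      GrzSeq c (Formula.box (Formula.imp A (Formula.box A)) ::ₘ boxed P, {A}) →
      GrzSeq c (Γ + boxed P, Formula.box A ::ₘ Δ)
  | cut (Γ Δ : Multiset Formula) (A : Formula) :
      GrzSeq true (Γ, A ::ₘ Δ) → GrzSeq true (A ::ₘ Γ, Δ) → GrzSeq true (Γ, Δ)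


/-! ### Auxiliary development for cut-elimination fixed point -/

open Classical

namespace CutElimAux

theorem InfProof.ext' {π τ : InfProof} (h : π.lab = τ.lab) : π = τ := by
  cases π; cases τ; simp only at h; subst h; rfl

theorem lab_none_append (π : InfProof) :
    ∀ (y x : List Bool), π.lab x = none → π.lab (x ++ y) = none
  | [], x, h => by simpa using h
  | i :: y', x, h => by
    have h1 : π.lab (x ++ [i]) = none := π.nojunk x i h
    have h2 := lab_none_append π y' (x ++ [i]) h1
    simpa [List.append_assoc] using h2

theorem isSome_prefix (π : InfProof) (x y : List Bool)
    (h : (π.lab (x ++ y)).isSome) : (π.lab x).isSome := by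
  by_contra hc
  rw [Option.not_isSome_iff_eq_none] at hc
  rw [lab_none_append π y x hc] at h
  simp at h

theorem step_nil (π : InfProof) (r : Rule) (s : Sequent) (h : π.lab [] = some (r, s)) :
    Inst r s ((π.lab [false]).map Prod.snd) ((π.lab [true]).map Prod.snd) :=
  π.step [] r s h

theorem inst_fst_some {r s p q} (h : Inst r s p q) (hr : r ≠ .ax) (hr2 : r ≠ .axBot) :
    p.isSome := by cases h <;> simp_all

theorem inst_snd_none {r s p q} (h : Inst r s p q) (hr : r = .impR ∨ r = .refl) :
    q = none := by cases h <;> simp_all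

theorem inst_snd_some {r s p q} (h : Inst r s p q) (hr : r = .impL ∨ r = .box ∨ r = .cut) :
    q.isSome := by cases h <;> simp_all

theorem inst_of_ax {r s p q} (h : Inst r s p q) (hr : r = .ax ∨ r = .axBot) :
    p = none ∧ q = none := by cases h <;> simp_all

/-- Left child is present unless the rule is an axiom. -/
theorem child_false_some (π : InfProof) (r : Rule) (s : Sequent)
    (h : π.lab [] = some (r, s)) (hr : r ≠ .ax) (hr2 : r ≠ .axBot) :
    (π.lab [false]).isSome := by
  have := inst_fst_some (step_nil π r s h) hr hr2
  simpa [Option.isSome_map] using this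

theorem child_true_some (π : InfProof) (r : Rule) (s : Sequent)
    (h : π.lab [] = some (r, s)) (hr : r = .impL ∨ r = .box ∨ r = .cut) :
    (π.lab [true]).isSome := by
  have := inst_snd_some (step_nil π r s h) hr
  simpa [Option.isSome_map] using this

theorem child_true_none (π : InfProof) (r : Rule) (s : Sequent)
    (h : π.lab [] = some (r, s)) (hr : r = .impR ∨ r = .refl) :
    π.lab [true] = none := by
  have := inst_snd_none (step_nil π r s h) hr
  simpa [Option.map_eq_none_iff] using this

theorem child_none_of_ax (π : InfProof) (r : Rule) (s : Sequent)
    (h : π.lab [] = some (r, s)) (hr : r = .ax ∨ r = .axBot) (i : Bool) :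
    π.lab [i] = none := by
  have := inst_of_ax (step_nil π r s h) hr
  cases i
  · simpa [Option.map_eq_none_iff] using this.1
  · simpa [Option.map_eq_none_iff] using this.2


/-! #### Subtrees -/

/-- A labelling is valid iff it is the labelling of some ∞-proof. -/
def VLab (l : Lab) : Prop := ∃ π : InfProof, π.lab = l

theorem subtree_exists (π : InfProof) (i : Bool) (h : (π.lab [i]).isSome) :
    ∃ τ : InfProof, τ.lab = shift i π.lab := by
  refine ⟨⟨shift i π.lab, h, ?_, ?_, ?_⟩, rfl⟩
  · intro a j hn
    exact π.nojunk (i :: a) j hn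
  · intro a r s hs
    exact π.step (i :: a) r s hs
  · intro f hf N
    set g : ℕ → Bool := fun n => match n with | 0 => i | k+1 => f k with hg
    have hrange : ∀ n : ℕ, (List.range (n+1)).map g = i :: (List.range n).map f := by
      intro n
      rw [List.range_succ_eq_map, List.map_cons, List.map_map]
      rfl
    have hgsome : ∀ n : ℕ, (π.lab ((List.range n).map g)).isSome := by
      intro n
      match n with
      | 0 => exact π.root_some
      | m+1 => rw [hrange m]; exact hf m
    obtain ⟨n, hn, hgt, hbox⟩ := π.branch g hgsome (N+1)
    match n, hn with
    | m+1, hn =>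
      refine ⟨m, by omega, hgt, ?_⟩
      have := hbox
      rw [hrange m] at this
      exact this

open Classical in
theorem subtree_lab (π : InfProof) (i : Bool) (h : (π.lab [i]).isSome) :
    (subtree π i).lab = shift i π.lab := by
  have hex := subtree_exists π i h
  simp only [subtree, dif_pos hex]
  exact hex.choose_spec

theorem vlab_shift {l : Lab} (hl : VLab l) (i : Bool) (h : (l [i]).isSome) :
    VLab (shift i l) := by
  obtain ⟨π, rfl⟩ := hl
  exact subtree_exists π i h

/-! #### The main fragment and heights -/

def hset (l : Lab) : Set ℕ := {n : ℕ | ∃ a : List Bool, InMain l a ∧ a.length = n}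

theorem height_def (l : Lab) : height l = sSup (hset l) := rfl

theorem inMain_nil (l : Lab) (h : (l []).isSome) : InMain l [] := by
  refine ⟨h, ?_⟩
  intro b c hc
  exact absurd (congrArg List.length hc) (by simp)

theorem inMain_single (l : Lab) (i : Bool) (h : (l [i]).isSome) : InMain l [i] := by
  refine ⟨h, ?_⟩
  intro b c hc hb
  rcases b with _ | ⟨x, b'⟩
  · obtain ⟨-, h2⟩ := List.cons.inj hc
    exact h2.symm
  · injection hc with _ h2
    exact absurd (congrArg List.length h2) (by simp)

theorem inMain_prefix (π : InfProof) (x y : List Bool) (h : InMain π.lab (x ++ y)) :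
    InMain π.lab x := by
  refine ⟨isSome_prefix π x y h.1, ?_⟩
  intro b c hbc hb
  have h2 := h.2 b (c ++ y) (by rw [hbc]; simp) hb
  exact (List.append_eq_nil_iff.mp h2).1

theorem inMain_shift_iff (l : Lab) (i : Bool) (a : List Bool)
    (hcond : i = false ∨ (l []).map Prod.fst ≠ some Rule.box) :
    InMain l (i :: a) ↔ InMain (shift i l) a := by
  constructor
  · rintro ⟨h1, h2⟩
    exact ⟨h1, fun b c hbc hb => h2 (i :: b) c (by rw [hbc]; rfl) hb⟩
  · rintro ⟨h1, h2⟩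
    refine ⟨h1, ?_⟩
    intro b c hbc hb
    rcases b with _ | ⟨x, b'⟩
    · injection hbc with h3 h4
      rcases hcond with h | h
      · exact absurd h3 (by simp [h])
      · exact absurd hb h
    · injection hbc with h3 h4
      subst h3
      exact h2 b' c h4 hb

/-! #### König's lemma: boundedness of the main fragment -/

def Ubig (l : Lab) (a : List Bool) : Prop :=
  ∀ n : ℕ, ∃ b : List Bool, InMain l (a ++ b) ∧ n ≤ b.length

open Classical in
noncomputable def kseq (l : Lab) : ℕ → List Bool
  | 0 => []
  | n+1 =>
      let p := kseq l n
      p ++ [if Ubig l (p ++ [false]) then false else true]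

open Classical in
noncomputable def kfun (l : Lab) (n : ℕ) : Bool :=
  if Ubig l (kseq l n ++ [false]) then false else true

theorem kseq_succ (l : Lab) (n : ℕ) : kseq l (n+1) = kseq l n ++ [kfun l n] := by
  simp [kseq, kfun]

theorem ubig_step (l : Lab) (a : List Bool) (h : Ubig l a) :
    Ubig l (a ++ [if Ubig l (a ++ [false]) then false else true]) := by
  by_cases h0 : Ubig l (a ++ [false])
  · simp [h0]
  · simp only [h0, if_false]
    by_contra h1
    simp only [Ubig, not_forall, not_exists, not_and, not_le] at h0 h1
    obtain ⟨n0, hn0⟩ := h0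
    obtain ⟨n1, hn1⟩ := h1
    obtain ⟨b, hb, hlen⟩ := h (n0 + n1 + 1)
    rcases b with _ | ⟨i, b'⟩
    · simp at hlen
    · have hb' : InMain l ((a ++ [i]) ++ b') := by
        rw [List.append_assoc]
        simpa using hb
      cases i
      · have := hn0 b' hb'
        simp at hlen
        omega
      · have := hn1 b' hb'
        simp at hlen
        omega

theorem kseq_Ubig (l : Lab) (h0 : Ubig l []) : ∀ n : ℕ, Ubig l (kseq l n)
  | 0 => h0
  | n+1 => by
      rw [kseq_succ]
      exact ubig_step l (kseq l n) (kseq_Ubig l h0 n)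

theorem kseq_eq (l : Lab) : ∀ n : ℕ, kseq l n = (List.range n).map (kfun l)
  | 0 => rfl
  | n+1 => by
      rw [kseq_succ, List.range_succ, List.map_append, ← kseq_eq l n]
      rfl

theorem main_bdd (π : InfProof) : BddAbove (hset π.lab) := by
  by_contra hb
  have h0 : Ubig π.lab [] := by
    intro n
    obtain ⟨m, hm, hlt⟩ := not_bddAbove_iff.mp hb n
    obtain ⟨a, ha, rfl⟩ := hm
    exact ⟨a, by simpa using ha, le_of_lt hlt⟩
  have hU := kseq_Ubig π.lab h0
  have hsome : ∀ n, (π.lab ((List.range n).map (kfun π.lab))).isSome := by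
    intro n
    rw [← kseq_eq]
    obtain ⟨b, hb', _⟩ := hU n 0
    exact (inMain_prefix π _ b hb').1
  obtain ⟨n, -, hft, hbox⟩ := π.branch (kfun π.lab) hsome 0
  obtain ⟨b, hb', hlen⟩ := hU (n+1) 1
  have hdec : kseq π.lab (n+1) ++ b = kseq π.lab n ++ true :: b := by
    rw [kseq_succ, hft, List.append_assoc]
    rfl
  rw [hdec] at hb'
  have hbox' : (π.lab (kseq π.lab n)).map Prod.fst = some Rule.box := by
    rw [kseq_eq]; exact hbox
  have := hb'.2 (kseq π.lab n) b rfl hbox'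
  subst this
  simp at hlen

theorem vlab_bdd {l : Lab} (hl : VLab l) : BddAbove (hset l) := by
  obtain ⟨π, rfl⟩ := hl
  exact main_bdd π

theorem one_le_height {l : Lab} (hl : VLab l) (i : Bool) (h : (l [i]).isSome) :
    1 ≤ height l :=
  le_csSup (vlab_bdd hl) ⟨[i], inMain_single _ _ h, rfl⟩

theorem height_ne_zero {l : Lab} (hl : VLab l) (i : Bool) (h : (l [i]).isSome) :
    height l ≠ 0 := by
  have := one_le_height hl i h
  omega

theorem height_zero_of_ax (π : InfProof) (r : Rule) (s : Sequent)
    (h : π.lab [] = some (r, s)) (hr : r = .ax ∨ r = .axBot) : height π.lab = 0 := by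
  have hne : (hset π.lab).Nonempty := ⟨0, [], inMain_nil _ (by rw [h]; rfl), rfl⟩
  have hb : ∀ b ∈ hset π.lab, b ≤ 0 := by
    rintro n ⟨a, ha, rfl⟩
    rcases a with _ | ⟨j, a'⟩
    · simp
    · exfalso
      have hnone : π.lab ([j] ++ a') = none :=
        lab_none_append π a' [j] (child_none_of_ax π r s h hr j)
      have := ha.1
      rw [show (j :: a') = [j] ++ a' from rfl, hnone] at this
      simp at this
  exact Nat.le_zero.mp (csSup_le hne hb)

theorem height_shift_lt {l : Lab} (hl : VLab l) (i : Bool) (h : (l [i]).isSome)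
    (hc : i = false ∨ (l []).map Prod.fst ≠ some Rule.box) :
    height (shift i l) < height l := by
  have hbdd : BddAbove (hset (shift i l)) := vlab_bdd (vlab_shift hl i h)
  have hne : (hset (shift i l)).Nonempty := ⟨0, [], inMain_nil _ h, rfl⟩
  have h1 : 1 ≤ height l := one_le_height hl i h
  have h2 : height (shift i l) ≤ height l - 1 := by
    rw [height_def]
    apply csSup_le hne
    rintro n ⟨a, ha, rfl⟩
    have hm : InMain l (i :: a) := (inMain_shift_iff l i a hc).mpr ha
    have h3 : a.length + 1 ≤ height l :=
      le_csSup (vlab_bdd hl) ⟨i :: a, hm, by simp⟩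
    omega
  omega


/-! #### VLab-level helpers -/

theorem root_rule {l : Lab} (hl : VLab l) : ∃ r s, l [] = some (r, s) := by
  obtain ⟨π, rfl⟩ := hl
  obtain ⟨⟨r, s⟩, h⟩ := Option.isSome_iff_exists.mp π.root_some
  exact ⟨r, s, h⟩

theorem vchild_false_some {l : Lab} {r : Rule} {s : Sequent} (hl : VLab l)
    (h : l [] = some (r, s)) (h1 : r ≠ .ax) (h2 : r ≠ .axBot) : (l [false]).isSome := by
  obtain ⟨π, rfl⟩ := hl
  exact child_false_some π r s h h1 h2

theorem vchild_true_some {l : Lab} {r : Rule} {s : Sequent} (hl : VLab l)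
    (h : l [] = some (r, s)) (hr : r = .impL ∨ r = .box ∨ r = .cut) : (l [true]).isSome := by
  obtain ⟨π, rfl⟩ := hl
  exact child_true_some π r s h hr

theorem vchild_true_none {l : Lab} {r : Rule} {s : Sequent} (hl : VLab l)
    (h : l [] = some (r, s)) (hr : r = .impR ∨ r = .refl) : l [true] = none := by
  obtain ⟨π, rfl⟩ := hl
  exact child_true_none π r s h hr

theorem vheight_zero_of_ax {l : Lab} {r : Rule} {s : Sequent} (hl : VLab l)
    (h : l [] = some (r, s)) (hr : r = .ax ∨ r = .axBot) : height l = 0 := by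
  obtain ⟨π, rfl⟩ := hl
  exact height_zero_of_ax π r s h hr

theorem vstep_nil {l : Lab} {r : Rule} {s : Sequent} (hl : VLab l)
    (h : l [] = some (r, s)) :
    Inst r s ((l [false]).map Prod.snd) ((l [true]).map Prod.snd) := by
  obtain ⟨π, rfl⟩ := hl
  exact step_nil π r s h

/-! #### MemP lemmas -/

theorem memP_mono {n : ℕ} {l : Lab} (h : MemP n l) : ∀ m, m ≤ n → MemP m l := by
  induction h with
  | zero l => intro m hm; rw [Nat.le_zero.mp hm]; exact .zero l
  | leaf n l hh => intro m _; exact .leaf m l hh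
  | bin n l s h' _ _ ih1 ih2 => intro m hm; exact .bin m l s h' (ih1 m hm) (ih2 m hm)
  | un n l r s hr h' _ ih1 => intro m hm; exact .un m l r s hr h' (ih1 m hm)
  | box n l s h' _ _ ih1 ih2 =>
      intro m hm
      match m with
      | 0 => exact .zero l
      | j+1 => exact .box j l s h' (ih1 (j+1) (by omega)) (ih2 j (by omega))

theorem memP_impL_inv {k : ℕ} {l : Lab} {s : Sequent} (hl : VLab l) (h : MemP k l)
    (hk : k ≠ 0) (hr : l [] = some (.impL, s)) :
    MemP k (shift false l) ∧ MemP k (shift true l) := by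
  cases h with
  | zero => exact absurd rfl hk
  | leaf n _ hh =>
      exact absurd hh
        (height_ne_zero hl false (vchild_false_some hl hr (by decide) (by decide)))
  | bin n _ s' h' m1 m2 => exact ⟨m1, m2⟩
  | un n _ r s' hr' h' m1 => rw [hr] at h'; rcases hr' with h | h <;> simp_all
  | box n _ s' h' m1 m2 => rw [hr] at h'; simp_all

theorem memP_un_inv {k : ℕ} {l : Lab} {r : Rule} {s : Sequent} (hl : VLab l) (h : MemP k l)
    (hk : k ≠ 0) (hrr : r = .impR ∨ r = .refl) (hr : l [] = some (r, s)) :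
    MemP k (shift false l) := by
  cases h with
  | zero => exact absurd rfl hk
  | leaf n _ hh =>
      refine absurd hh (height_ne_zero hl false (vchild_false_some hl hr ?_ ?_)) <;>
        rcases hrr with h | h <;> simp [h] <;> decide
  | bin n _ s' h' m1 m2 => rw [hr] at h'; rcases hrr with h | h <;> simp_all
  | un n _ r' s' hr' h' m1 => exact m1
  | box n _ s' h' m1 m2 => rw [hr] at h'; rcases hrr with h | h <;> simp_all

theorem memP_box_inv {k : ℕ} {l : Lab} {s : Sequent} (hl : VLab l) (h : MemP k l)
    (hk : k ≠ 0) (hr : l [] = some (.box, s)) :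
    MemP k (shift false l) ∧ MemP (k - 1) (shift true l) := by
  cases h with
  | zero => exact absurd rfl hk
  | leaf n _ hh =>
      exact absurd hh
        (height_ne_zero hl false (vchild_false_some hl hr (by decide) (by decide)))
  | bin n _ s' h' m1 m2 => rw [hr] at h'; simp_all
  | un n _ r' s' hr' h' m1 => rw [hr] at h'; rcases hr' with h | h <;> simp_all
  | box n _ s' h' m1 m2 => exact ⟨m1, by simpa using m2⟩

theorem memP1_ne_cut {l : Lab} {s : Sequent} (hl : VLab l) (h : MemP 1 l)
    (hr : l [] = some (.cut, s)) : False := by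
  cases h with
  | leaf n _ hh =>
      exact absurd hh
        (height_ne_zero hl false (vchild_false_some hl hr (by decide) (by decide)))
  | bin n _ s' h' m1 m2 => rw [hr] at h'; simp_all
  | un n _ r' s' hr' h' m1 => rw [hr] at h'; rcases hr' with h | h <;> simp_all
  | box n _ s' h' m1 m2 => rw [hr] at h'; simp_all

/-! #### Sim lemmas -/

theorem sim_symm {n : ℕ} {l m : Lab} (h : Sim n l m) : Sim n m l := by
  induction h with
  | zero l m => exact .zero m l
  | leaf n l h => exact .leaf n l h
  | bin n l m r s hr h1 h2 e1 e2 s1 s2 ih1 ih2 =>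
      exact .bin n m l r s hr h2 h1 e1.symm e2.symm ih1 ih2
  | un n l m r s hr h1 h2 e1 s1 ih1 =>
      exact .un n m l r s hr h2 h1 e1.symm ih1
  | box n l m s h1 h2 e1 e2 s1 s2 ih1 ih2 =>
      exact .box n m l s h2 h1 e1.symm e2.symm ih1 ih2

theorem sim_refl_aux : ∀ (n h : ℕ) (l : Lab), VLab l → height l ≤ h → Sim n l l := by
  intro n
  induction n with
  | zero => intro h l _ _; exact .zero l l
  | succ k ihn =>
    intro h
    induction h with
    | zero => intro l hl hh; exact .leaf _ l (Nat.le_zero.mp hh)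
    | succ j ihh =>
      intro l hl hh
      obtain ⟨r, s, hroot⟩ := root_rule hl
      by_cases h0 : height l = 0
      · exact .leaf _ l h0
      have hax : r ≠ .ax ∧ r ≠ .axBot := by
        constructor <;> rintro rfl <;> exact h0 (vheight_zero_of_ax hl hroot (by simp))
      have hfs : (l [false]).isSome := vchild_false_some hl hroot hax.1 hax.2
      have hlf : height (shift false l) ≤ j := by
        have := height_shift_lt hl false hfs (Or.inl rfl)
        omega
      have hvf : VLab (shift false l) := vlab_shift hl false hfs
      cases r with
      | ax => exact absurd rfl hax.1
      | axBot => exact absurd rfl hax.2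
      | impL | cut =>
          have hts : (l [true]).isSome := vchild_true_some hl hroot (by simp)
          have hnb : (l []).map Prod.fst ≠ some Rule.box := by rw [hroot]; simp
          have hlt : height (shift true l) ≤ j := by
            have := height_shift_lt hl true hts (Or.inr hnb)
            omega
          exact .bin (k+1) l l _ s (by simp) hroot hroot rfl rfl
            (ihh (shift false l) hvf hlf)
            (ihh (shift true l) (vlab_shift hl true hts) hlt)
      | impR | refl =>
          exact .un (k+1) l l _ s (by simp) hroot hroot rfl
            (ihh (shift false l) hvf hlf)
      | box =>
          have hts : (l [true]).isSome := vchild_true_some hl hroot (by simp)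
          exact .box k l l s hroot hroot rfl rfl
            (ihh (shift false l) hvf hlf)
            (ihn (height (shift true l)) (shift true l) (vlab_shift hl true hts) le_rfl)

theorem sim_refl (n : ℕ) {l : Lab} (hl : VLab l) : Sim n l l :=
  sim_refl_aux n (height l) l hl le_rfl

theorem sim_memP1 : ∀ {n : ℕ} {l m : Lab}, Sim n l m → n ≠ 0 → VLab l → VLab m →
    MemP 1 l → MemP 1 m := by
  intro n l m h
  induction h with
  | zero l m => exact fun h0 => absurd rfl h0
  | leaf n l h => exact fun _ _ _ h1 => h1
  | bin n l m r s hr hl0 hm0 e1 e2 s1 s2 ih1 ih2 =>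
      intro hn hvl hvm h1
      rcases hr with rfl | rfl
      · have hinv := memP_impL_inv hvl h1 one_ne_zero hl0
        have hfl : (l [false]).isSome := vchild_false_some hvl hl0 (by decide) (by decide)
        have htl : (l [true]).isSome := vchild_true_some hvl hl0 (by simp)
        have hfm : (m [false]).isSome := vchild_false_some hvm hm0 (by decide) (by decide)
        have htm : (m [true]).isSome := vchild_true_some hvm hm0 (by simp)
        exact MemP.bin 1 m s hm0
          (ih1 hn (vlab_shift hvl false hfl) (vlab_shift hvm false hfm) hinv.1)
          (ih2 hn (vlab_shift hvl true htl) (vlab_shift hvm true htm) hinv.2)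
      · exact absurd hl0 (fun hc => memP1_ne_cut hvl h1 hc)
  | un n l m r s hr hl0 hm0 e1 s1 ih1 =>
      intro hn hvl hvm h1
      have hinv := memP_un_inv hvl h1 one_ne_zero hr hl0
      have hax : r ≠ .ax ∧ r ≠ .axBot := by
        rcases hr with rfl | rfl <;> exact ⟨by decide, by decide⟩
      have hfl : (l [false]).isSome := vchild_false_some hvl hl0 hax.1 hax.2
      have hfm : (m [false]).isSome := vchild_false_some hvm hm0 hax.1 hax.2
      exact MemP.un 1 m r s hr hm0
        (ih1 hn (vlab_shift hvl false hfl) (vlab_shift hvm false hfm) hinv)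
  | box n l m s hl0 hm0 e1 e2 s1 s2 ih1 ih2 =>
      intro hn hvl hvm h1
      have hinv := memP_box_inv hvl h1 one_ne_zero hl0
      have hfl : (l [false]).isSome := vchild_false_some hvl hl0 (by decide) (by decide)
      have hfm : (m [false]).isSome := vchild_false_some hvm hm0 (by decide) (by decide)
      exact MemP.box 0 m s hm0
        (ih1 (Nat.succ_ne_zero n) (vlab_shift hvl false hfl) (vlab_shift hvm false hfm) hinv.1)
        (MemP.zero _)

/-! #### Cut-freeness from membership in all 𝒫ₙ -/

theorem memP_no_cut : ∀ (a : List Bool) (l : Lab), VLab l →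
    MemP (a.count true + 1) l → ∀ s : Sequent, l a ≠ some (.cut, s) := by
  intro a
  induction a with
  | nil =>
      intro l hvl h s hc
      exact memP1_ne_cut hvl (by simpa using h) hc
  | cons i a' ih =>
      intro l hvl h s hc
      obtain ⟨π, rfl⟩ := hvl
      have hvl : VLab π.lab := ⟨π, rfl⟩
      have hsome : (π.lab [i]).isSome := by
        apply isSome_prefix π [i] a'
        rw [show ([i] ++ a' : List Bool) = i :: a' from rfl, hc]
        rfl
      obtain ⟨r, s0, hroot⟩ := root_rule hvl
      have hcount : ((i :: a').count true + 1) ≠ 0 := by omega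
      have hshift : shift i π.lab a' = some (Rule.cut, s) := hc
      have hvs : VLab (shift i π.lab) := vlab_shift hvl i hsome
      cases r with
      | ax | axBot =>
          rw [child_none_of_ax π _ s0 hroot (by simp) i] at hsome
          simp at hsome
      | cut =>
          exact memP1_ne_cut hvl (memP_mono h 1 (by omega)) hroot
      | impL =>
          have hinv := memP_impL_inv hvl h hcount hroot
          cases i with
          | false =>
              refine ih (shift false π.lab) hvs ?_ s hshift
              have : (false :: a').count true = a'.count true := by simp
              rw [this] at hinv
              exact hinv.1
          | true =>
              refine ih (shift true π.lab) hvs ?_ s hshift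
              apply memP_mono hinv.2
              simp [List.count_cons]
      | impR | refl =>
          cases i with
          | true =>
              have hnone : π.lab [true] = none := vchild_true_none hvl hroot (by simp)
              have : π.lab ([true] ++ a') = none := lab_none_append π a' [true] hnone
              rw [show ([true] ++ a' : List Bool) = true :: a' from rfl, hc] at this
              simp at this
          | false =>
              have hinv := memP_un_inv hvl h hcount (by simp) hroot
              refine ih (shift false π.lab) hvs ?_ s hshift
              have : (false :: a').count true = a'.count true := by simp
              rw [this] at hinv
              exact hinv
      | box =>
          have hinv := memP_box_inv hvl h hcount hroot
          cases i with
          | false =>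
              refine ih (shift false π.lab) hvs ?_ s hshift
              have : (false :: a').count true = a'.count true := by simp
              rw [this] at hinv
              exact hinv.1
          | true =>
              refine ih (shift true π.lab) hvs ?_ s hshift
              have h2 := hinv.2
              have : (true :: a').count true + 1 - 1 = a'.count true + 1 := by
                simp [List.count_cons]
              rw [this] at h2
              exact h2


/-! #### Properties of the operator ℱ -/

theorem rootPres_snd {f : InfProof → InfProof} (hf : RootPres f) (π : InfProof) :
    ((f π).lab []).map Prod.snd = (π.lab []).map Prod.snd := by
  obtain ⟨r, s, h⟩ := root_rule (⟨π, rfl⟩ : VLab π.lab)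
  obtain ⟨r', h'⟩ := hf π s ⟨r, h⟩
  rw [h, h']; rfl

section FOp

variable {E : InfProof → InfProof} {F : (InfProof → InfProof) → InfProof → InfProof}

theorem FU_root (hF : IsFOp E F) (U : InfProof → InfProof) (π : InfProof)
    {r : Rule} {s : Sequent} (hm : MemP 1 π.lab) (hroot : π.lab [] = some (r, s)) :
    ∃ r', (F U π).lab [] = some (r', s) := by
  have hvl : VLab π.lab := ⟨π, rfl⟩
  cases r with
  | ax | axBot =>
      rw [(hF U π).1 hm (vheight_zero_of_ax hvl hroot (by simp))]
      exact ⟨_, hroot⟩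
  | cut => exact absurd hroot (fun hc => memP1_ne_cut hvl hm hc)
  | box => exact ⟨.box, ((hF U π).2.2.1 s hm hroot).1⟩
  | impL | impR | refl =>
      by_cases h0 : height π.lab = 0
      · rw [(hF U π).1 hm h0]; exact ⟨_, hroot⟩
      · exact ⟨_, ((hF U π).2.1 _ s hm hroot (by decide) (by decide) h0).1⟩

theorem FU_rootPres (hF : IsFOp E F) (hER : RootPres E) (hEM : ∀ π, MemP 1 (E π).lab)
    (U : InfProof → InfProof) : RootPres (F U) := by
  intro π S hp
  by_cases h1 : MemP 1 π.lab
  · obtain ⟨r, hroot⟩ := hp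
    obtain ⟨r', h'⟩ := FU_root hF U π h1 hroot
    exact ⟨r', h'⟩
  · rw [(hF U π).2.2.2 h1]
    obtain ⟨r, hroot⟩ := hER π S hp
    obtain ⟨r', h'⟩ := FU_root hF U (E π) (hEM π) hroot
    exact ⟨r', h'⟩

theorem FU_root_snd (hF : IsFOp E F) (U : InfProof → InfProof) (π : InfProof)
    (hm : MemP 1 π.lab) :
    ((F U π).lab []).map Prod.snd = (π.lab []).map Prod.snd := by
  obtain ⟨r, s, h⟩ := root_rule (⟨π, rfl⟩ : VLab π.lab)
  obtain ⟨r', h'⟩ := FU_root hF U π hm h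
  rw [h, h']; rfl

theorem FU_memP_aux (hF : IsFOp E F) (U : InfProof → InfProof) (n : ℕ)
    (hImg : ∀ ρ : InfProof, MemP n (U ρ).lab) :
    ∀ {k : ℕ} {l : Lab}, MemP k l → k = 1 → ∀ π : InfProof, π.lab = l →
      MemP (n + 1) (F U π).lab := by
  intro k l h
  induction h with
  | zero l => intro hk; omega
  | leaf k l hh =>
      intro hk π hπ
      subst hπ; subst hk
      rw [(hF U π).1 (MemP.leaf 1 _ hh) hh]
      exact MemP.leaf _ _ hh
  | bin k l s hroot m1 m2 ih1 ih2 =>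
      intro hk π hπ
      subst hπ; subst hk
      have hvl : VLab π.lab := ⟨π, rfl⟩
      have hm : MemP 1 π.lab := MemP.bin 1 _ s hroot m1 m2
      have hfs : (π.lab [false]).isSome := vchild_false_some hvl hroot (by decide) (by decide)
      have hts : (π.lab [true]).isSome := vchild_true_some hvl hroot (by simp)
      have hne : height π.lab ≠ 0 := height_ne_zero hvl false hfs
      obtain ⟨hr0, hsf, hst⟩ :=
        (hF U π).2.1 .impL s hm hroot (by decide) (by decide) hne
      refine MemP.bin (n+1) _ s hr0 ?_ ?_
      · rw [hsf]; exact ih1 rfl (subtree π false) (subtree_lab π false hfs)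
      · rw [hst rfl]; exact ih2 rfl (subtree π true) (subtree_lab π true hts)
  | un k l r s hr hroot m1 ih1 =>
      intro hk π hπ
      subst hπ; subst hk
      have hvl : VLab π.lab := ⟨π, rfl⟩
      have hm : MemP 1 π.lab := MemP.un 1 _ r s hr hroot m1
      have hax : r ≠ .ax ∧ r ≠ .axBot := by
        rcases hr with rfl | rfl <;> exact ⟨by decide, by decide⟩
      have hfs : (π.lab [false]).isSome := vchild_false_some hvl hroot hax.1 hax.2
      have hne : height π.lab ≠ 0 := height_ne_zero hvl false hfs
      have hrb : r ≠ .box ∧ r ≠ .cut := by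
        rcases hr with rfl | rfl <;> exact ⟨by decide, by decide⟩
      obtain ⟨hr0, hsf, -⟩ := (hF U π).2.1 r s hm hroot hrb.1 hrb.2 hne
      refine MemP.un (n+1) _ r s hr hr0 ?_
      rw [hsf]; exact ih1 rfl (subtree π false) (subtree_lab π false hfs)
  | box k l s hroot m1 m2 ih1 ih2 =>
      intro hk π hπ
      subst hπ
      have hk' : k = 0 := by omega
      subst hk'
      have hvl : VLab π.lab := ⟨π, rfl⟩
      have hm : MemP 1 π.lab := MemP.box 0 _ s hroot m1 m2
      have hfs : (π.lab [false]).isSome := vchild_false_some hvl hroot (by decide) (by decide)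
      have hts : (π.lab [true]).isSome := vchild_true_some hvl hroot (by simp)
      obtain ⟨hr0, hsf, hst⟩ := (hF U π).2.2.1 s hm hroot
      refine MemP.box n _ s hr0 ?_ ?_
      · rw [hsf]; exact ih1 rfl (subtree π false) (subtree_lab π false hfs)
      · rw [hst]; exact hImg (subtree π true)

theorem FU_memP (hF : IsFOp E F) (hEM : ∀ π, MemP 1 (E π).lab)
    (U : InfProof → InfProof) (n : ℕ) (hImg : ∀ ρ : InfProof, MemP n (U ρ).lab)
    (π : InfProof) : MemP (n + 1) (F U π).lab := by
  by_cases h1 : MemP 1 π.lab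
  · exact FU_memP_aux hF U n hImg h1 rfl π rfl
  · rw [(hF U π).2.2.2 h1]
    exact FU_memP_aux hF U n hImg (hEM π) rfl (E π) rfl

theorem FU_sim (hF : IsFOp E F)
    (U : InfProof → InfProof)
    (hUsnd : ∀ ρ : InfProof, ((U ρ).lab []).map Prod.snd = (ρ.lab []).map Prod.snd) :
    ∀ {n : ℕ} {l m : Lab}, Sim n l m →
      (∀ k, k < n → ∀ ρ σ : InfProof, Sim k ρ.lab σ.lab → Sim k (U ρ).lab (U σ).lab) →
      ∀ π τ : InfProof, π.lab = l → τ.lab = m → MemP 1 l → MemP 1 m →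
      Sim n (F U π).lab (F U τ).lab := by
  intro n l m h
  induction h with
  | zero l m => intro _ π τ _ _ _ _; exact .zero _ _
  | leaf n l hh =>
      intro _ π τ hπ hτ _ _
      have : π = τ := InfProof.ext' (by rw [hπ, hτ])
      subst this
      exact sim_refl n ⟨F U π, rfl⟩
  | bin n l m r s hr hl0 hm0 e1 e2 s1 s2 ih1 ih2 =>
      intro hU π τ hπ hτ h1 h2
      subst hπ; subst hτ
      have hvl : VLab π.lab := ⟨π, rfl⟩
      have hvm : VLab τ.lab := ⟨τ, rfl⟩
      rcases hr with rfl | rfl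
      · -- impL
        have hfl : (π.lab [false]).isSome := vchild_false_some hvl hl0 (by decide) (by decide)
        have htl : (π.lab [true]).isSome := vchild_true_some hvl hl0 (by simp)
        have hfm : (τ.lab [false]).isSome := vchild_false_some hvm hm0 (by decide) (by decide)
        have htm : (τ.lab [true]).isSome := vchild_true_some hvm hm0 (by simp)
        have hne : height π.lab ≠ 0 := height_ne_zero hvl false hfl
        have hneτ : height τ.lab ≠ 0 := height_ne_zero hvm false hfm
        obtain ⟨hr0, hsf, hst⟩ := (hF U π).2.1 .impL s h1 hl0 (by decide) (by decide) hne
        obtain ⟨hr0', hsf', hst'⟩ := (hF U τ).2.1 .impL s h2 hm0 (by decide) (by decide) hneτ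
        have hinv1 := memP_impL_inv hvl h1 one_ne_zero hl0
        have hinv2 := memP_impL_inv hvm h2 one_ne_zero hm0
        have labf : (subtree π false).lab = shift false π.lab := subtree_lab π false hfl
        have labt : (subtree π true).lab = shift true π.lab := subtree_lab π true htl
        have labf' : (subtree τ false).lab = shift false τ.lab := subtree_lab τ false hfm
        have labt' : (subtree τ true).lab = shift true τ.lab := subtree_lab τ true htm
        have hmf : MemP 1 (subtree π false).lab := by rw [labf]; exact hinv1.1
        have hmt : MemP 1 (subtree π true).lab := by rw [labt]; exact hinv1.2
        have hmf' : MemP 1 (subtree τ false).lab := by rw [labf']; exact hinv2.1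
        have hmt' : MemP 1 (subtree τ true).lab := by rw [labt']; exact hinv2.2
        have ef : ((F U π).lab [false]).map Prod.snd = ((F U τ).lab [false]).map Prod.snd := by
          have q1 : (F U π).lab [false] = (F U (subtree π false)).lab [] := congrFun hsf []
          have q2 : (F U τ).lab [false] = (F U (subtree τ false)).lab [] := congrFun hsf' []
          rw [q1, q2, FU_root_snd hF U _ hmf, FU_root_snd hF U _ hmf', labf, labf']
          exact e1
        have et : ((F U π).lab [true]).map Prod.snd = ((F U τ).lab [true]).map Prod.snd := by
          have q1 : (F U π).lab [true] = (F U (subtree π true)).lab [] := congrFun (hst rfl) []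
          have q2 : (F U τ).lab [true] = (F U (subtree τ true)).lab [] := congrFun (hst' rfl) []
          rw [q1, q2, FU_root_snd hF U _ hmt, FU_root_snd hF U _ hmt', labt, labt']
          exact e2
        refine Sim.bin n _ _ .impL s (Or.inl rfl) hr0 hr0' ef et ?_ ?_
        · rw [hsf, hsf']
          exact ih1 hU (subtree π false) (subtree τ false) labf labf' hinv1.1 hinv2.1
        · rw [hst rfl, hst' rfl]
          exact ih2 hU (subtree π true) (subtree τ true) labt labt' hinv1.2 hinv2.2
      · exact absurd hl0 (fun hc => memP1_ne_cut hvl h1 hc)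
  | un n l m r s hr hl0 hm0 e1 s1 ih1 =>
      intro hU π τ hπ hτ h1 h2
      subst hπ; subst hτ
      have hvl : VLab π.lab := ⟨π, rfl⟩
      have hvm : VLab τ.lab := ⟨τ, rfl⟩
      have hax : r ≠ .ax ∧ r ≠ .axBot ∧ r ≠ .box ∧ r ≠ .cut := by
        rcases hr with rfl | rfl <;> exact ⟨by decide, by decide, by decide, by decide⟩
      have hfl : (π.lab [false]).isSome := vchild_false_some hvl hl0 hax.1 hax.2.1
      have hfm : (τ.lab [false]).isSome := vchild_false_some hvm hm0 hax.1 hax.2.1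
      have hne : height π.lab ≠ 0 := height_ne_zero hvl false hfl
      have hneτ : height τ.lab ≠ 0 := height_ne_zero hvm false hfm
      obtain ⟨hr0, hsf, -⟩ := (hF U π).2.1 r s h1 hl0 hax.2.2.1 hax.2.2.2 hne
      obtain ⟨hr0', hsf', -⟩ := (hF U τ).2.1 r s h2 hm0 hax.2.2.1 hax.2.2.2 hneτ
      have hinv1 := memP_un_inv hvl h1 one_ne_zero hr hl0
      have hinv2 := memP_un_inv hvm h2 one_ne_zero hr hm0
      have labf : (subtree π false).lab = shift false π.lab := subtree_lab π false hfl
      have labf' : (subtree τ false).lab = shift false τ.lab := subtree_lab τ false hfm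
      have hmf : MemP 1 (subtree π false).lab := by rw [labf]; exact hinv1
      have hmf' : MemP 1 (subtree τ false).lab := by rw [labf']; exact hinv2
      have ef : ((F U π).lab [false]).map Prod.snd = ((F U τ).lab [false]).map Prod.snd := by
        have q1 : (F U π).lab [false] = (F U (subtree π false)).lab [] := congrFun hsf []
        have q2 : (F U τ).lab [false] = (F U (subtree τ false)).lab [] := congrFun hsf' []
        rw [q1, q2, FU_root_snd hF U _ hmf, FU_root_snd hF U _ hmf', labf, labf']
        exact e1
      refine Sim.un n _ _ r s hr hr0 hr0' ef ?_
      rw [hsf, hsf']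
      exact ih1 hU (subtree π false) (subtree τ false) labf labf' hinv1 hinv2
  | box n l m s hl0 hm0 e1 e2 s1 s2 ih1 ih2 =>
      intro hU π τ hπ hτ h1 h2
      subst hπ; subst hτ
      have hvl : VLab π.lab := ⟨π, rfl⟩
      have hvm : VLab τ.lab := ⟨τ, rfl⟩
      have hfl : (π.lab [false]).isSome := vchild_false_some hvl hl0 (by decide) (by decide)
      have htl : (π.lab [true]).isSome := vchild_true_some hvl hl0 (by simp)
      have hfm : (τ.lab [false]).isSome := vchild_false_some hvm hm0 (by decide) (by decide)
      have htm : (τ.lab [true]).isSome := vchild_true_some hvm hm0 (by simp)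
      obtain ⟨hr0, hsf, hst⟩ := (hF U π).2.2.1 s h1 hl0
      obtain ⟨hr0', hsf', hst'⟩ := (hF U τ).2.2.1 s h2 hm0
      have hinv1 := memP_box_inv hvl h1 one_ne_zero hl0
      have hinv2 := memP_box_inv hvm h2 one_ne_zero hm0
      have labf : (subtree π false).lab = shift false π.lab := subtree_lab π false hfl
      have labt : (subtree π true).lab = shift true π.lab := subtree_lab π true htl
      have labf' : (subtree τ false).lab = shift false τ.lab := subtree_lab τ false hfm
      have labt' : (subtree τ true).lab = shift true τ.lab := subtree_lab τ true htm
      have hmf : MemP 1 (subtree π false).lab := by rw [labf]; exact hinv1.1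
      have hmf' : MemP 1 (subtree τ false).lab := by rw [labf']; exact hinv2.1
      have ef : ((F U π).lab [false]).map Prod.snd = ((F U τ).lab [false]).map Prod.snd := by
        have q1 : (F U π).lab [false] = (F U (subtree π false)).lab [] := congrFun hsf []
        have q2 : (F U τ).lab [false] = (F U (subtree τ false)).lab [] := congrFun hsf' []
        rw [q1, q2, FU_root_snd hF U _ hmf, FU_root_snd hF U _ hmf', labf, labf']
        exact e1
      have et : ((F U π).lab [true]).map Prod.snd = ((F U τ).lab [true]).map Prod.snd := by
        have q1 : (F U π).lab [true] = (U (subtree π true)).lab [] := congrFun hst []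
        have q2 : (F U τ).lab [true] = (U (subtree τ true)).lab [] := congrFun hst' []
        rw [q1, q2, hUsnd, hUsnd, labt, labt']
        exact e2
      refine Sim.box n _ _ s hr0 hr0' ef et ?_ ?_
      · rw [hsf, hsf']
        exact ih1 hU (subtree π false) (subtree τ false) labf labf' hinv1.1 hinv2.1
      · rw [hst, hst']
        refine hU n (by omega) (subtree π true) (subtree τ true) ?_
        rw [labt, labt']
        exact s2

theorem FU_nonexpansive (hF : IsFOp E F)
    (hEN : Nonexpansive E) (hEM : ∀ π, MemP 1 (E π).lab)
    (U : InfProof → InfProof) (hUn : Nonexpansive U) (hUr : RootPres U) :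
    Nonexpansive (F U) := by
  intro n π τ h
  match n with
  | 0 => exact .zero _ _
  | k+1 =>
    have hUsnd := rootPres_snd hUr
    have hU : ∀ j, j < k + 1 → ∀ ρ σ : InfProof, Sim j ρ.lab σ.lab →
        Sim j (U ρ).lab (U σ).lab := fun j _ => hUn j
    by_cases h1 : MemP 1 π.lab <;> by_cases h2 : MemP 1 τ.lab
    · exact FU_sim hF U hUsnd h hU π τ rfl rfl h1 h2
    · exact absurd (sim_memP1 h (Nat.succ_ne_zero k) ⟨π, rfl⟩ ⟨τ, rfl⟩ h1) h2
    · exact absurd (sim_memP1 (sim_symm h) (Nat.succ_ne_zero k) ⟨τ, rfl⟩ ⟨π, rfl⟩ h2) h1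
    · rw [(hF U π).2.2.2 h1, (hF U τ).2.2.2 h2]
      exact FU_sim hF U hUsnd (hEN (k+1) π τ h) hU (E π) (E τ) rfl rfl (hEM π) (hEM τ)

theorem part_A (hF : IsFOp E F) (hEN : Nonexpansive E) (hER : RootPres E)
    (hEM : ∀ π, MemP 1 (E π).lab) :
    ∀ (n : ℕ) (U : InfProof → InfProof), InN n U → InN (n + 1) (F U) := by
  rintro n U ⟨hUn, hUr, hUi⟩
  exact ⟨FU_nonexpansive hF hEN hEM U hUn hUr, FU_rootPres hF hER hEM U,
    FU_memP hF hEM U n hUi⟩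

end FOp


/-! #### The fixed point: corecursive construction of ℰ -/

open Classical in
noncomputable def normp (E : InfProof → InfProof) (π : InfProof) : InfProof :=
  if MemP 1 π.lab then π else E π

theorem normp_of_memP1 {E : InfProof → InfProof} {π : InfProof} (h : MemP 1 π.lab) :
    normp E π = π := if_pos h

theorem normp_of_not {E : InfProof → InfProof} {π : InfProof} (h : ¬ MemP 1 π.lab) :
    normp E π = E π := if_neg h

theorem normp_memP1 {E : InfProof → InfProof} (hEM : ∀ π, MemP 1 (E π).lab) (π : InfProof) :
    MemP 1 (normp E π).lab := by
  unfold normp; split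
  · assumption
  · exact hEM π

theorem normp_snd {E : InfProof → InfProof} (hER : RootPres E) (π : InfProof) :
    ((normp E π).lab []).map Prod.snd = (π.lab []).map Prod.snd := by
  unfold normp; split
  · rfl
  · exact rootPres_snd hER π

theorem snd_eq_some {x : Option (Rule × Sequent)} {S : Sequent}
    (h : x.map Prod.snd = some S) : ∃ r, x = some (r, S) := by
  cases x with
  | none => simp at h
  | some v =>
      obtain ⟨r0, s0⟩ := v
      simp only [Option.map_some, Option.some.injEq] at h
      subst h
      exact ⟨r0, rfl⟩

open Classical in
noncomputable def elabp (E : InfProof → InfProof) : InfProof → List Bool → Option (Rule × Sequent)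
  | π, [] => (normp E π).lab []
  | π, i :: a' =>
      let π' := normp E π
      if height π'.lab = 0 then π'.lab (i :: a')
      else
        match (π'.lab []).map Prod.fst with
        | some .impL => elabp E (subtree π' i) a'
        | some .box => elabp E (subtree π' i) a'
        | some .impR => if i then none else elabp E (subtree π' false) a'
        | some .refl => if i then none else elabp E (subtree π' false) a'
        | _ => none

theorem elabp_nil (E : InfProof → InfProof) (π : InfProof) :
    elabp E π [] = (normp E π).lab [] := rfl

theorem elabp_cons_def (E : InfProof → InfProof) (π : InfProof) (i : Bool) (a' : List Bool) :
    elabp E π (i :: a') =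
      (if height (normp E π).lab = 0 then (normp E π).lab (i :: a')
      else
        match ((normp E π).lab []).map Prod.fst with
        | some .impL => elabp E (subtree (normp E π) i) a'
        | some .box => elabp E (subtree (normp E π) i) a'
        | some .impR => if i then none else elabp E (subtree (normp E π) false) a'
        | some .refl => if i then none else elabp E (subtree (normp E π) false) a'
        | _ => none) := rfl

theorem elabp_copy {E : InfProof → InfProof} {π : InfProof}
    (hh : height (normp E π).lab = 0) (a : List Bool) :
    elabp E π a = (normp E π).lab a := by
  cases a with
  | nil => rfl
  | cons i a' => rw [elabp_cons_def]; simp [hh]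

theorem elabp_binbox {E : InfProof → InfProof} {π : InfProof} {r : Rule} {s : Sequent}
    (hh : height (normp E π).lab ≠ 0) (hroot : (normp E π).lab [] = some (r, s))
    (hr : r = .impL ∨ r = .box) (i : Bool) (a : List Bool) :
    elabp E π (i :: a) = elabp E (subtree (normp E π) i) a := by
  rw [elabp_cons_def]
  rcases hr with rfl | rfl <;> simp [hh, hroot]

theorem elabp_unF {E : InfProof → InfProof} {π : InfProof} {r : Rule} {s : Sequent}
    (hh : height (normp E π).lab ≠ 0) (hroot : (normp E π).lab [] = some (r, s))
    (hr : r = .impR ∨ r = .refl) (a : List Bool) :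
    elabp E π (false :: a) = elabp E (subtree (normp E π) false) a := by
  rw [elabp_cons_def]
  rcases hr with rfl | rfl <;> simp [hh, hroot]

theorem elabp_unT {E : InfProof → InfProof} {π : InfProof} {r : Rule} {s : Sequent}
    (hh : height (normp E π).lab ≠ 0) (hroot : (normp E π).lab [] = some (r, s))
    (hr : r = .impR ∨ r = .refl) (a : List Bool) :
    elabp E π (true :: a) = none := by
  rw [elabp_cons_def]
  rcases hr with rfl | rfl <;> simp [hh, hroot]

theorem elabp_congr {E : InfProof → InfProof} {π ρ : InfProof}
    (h : normp E π = normp E ρ) (a : List Bool) : elabp E π a = elabp E ρ a := by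
  cases a with
  | nil => rw [elabp_nil, elabp_nil, h]
  | cons i a' => rw [elabp_cons_def, elabp_cons_def, h]

section EFixed

variable {E : InfProof → InfProof}

theorem root4 (hEM : ∀ π, MemP 1 (E π).lab) (π : InfProof)
    (hh : height (normp E π).lab ≠ 0) :
    ∃ r s, (normp E π).lab [] = some (r, s) ∧
      (r = .impL ∨ r = .impR ∨ r = .refl ∨ r = .box) := by
  have hvl : VLab (normp E π).lab := ⟨normp E π, rfl⟩
  obtain ⟨r, s, hroot⟩ := root_rule hvl
  refine ⟨r, s, hroot, ?_⟩
  cases r with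
  | ax | axBot => exact absurd (vheight_zero_of_ax hvl hroot (by simp)) hh
  | cut => exact absurd hroot (fun hc => memP1_ne_cut hvl (normp_memP1 hEM π) hc)
  | impL => simp
  | impR => simp
  | refl => simp
  | box => simp

/-- The immediate subtrees entered by `elabp` carry `MemP 1` and smaller height. -/
theorem elabp_sub_facts (hEM : ∀ π, MemP 1 (E π).lab) (π : InfProof)
    (hh : height (normp E π).lab ≠ 0) {r : Rule} {s : Sequent}
    (hroot : (normp E π).lab [] = some (r, s))
    (hr4 : r = .impL ∨ r = .impR ∨ r = .refl ∨ r = .box) (i : Bool)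
    (hi : i = false ∨ r = .impL) :
    (((normp E π).lab [i]).isSome ∧
      MemP 1 (subtree (normp E π) i).lab) ∧
      height (subtree (normp E π) i).lab < height (normp E π).lab := by
  set π' := normp E π with hπ'
  have hvl : VLab π'.lab := ⟨π', rfl⟩
  have hm : MemP 1 π'.lab := normp_memP1 hEM π
  have hax : r ≠ .ax ∧ r ≠ .axBot := by
    rcases hr4 with rfl | rfl | rfl | rfl <;> exact ⟨by decide, by decide⟩
  have hsome : (π'.lab [i]).isSome := by
    cases i with
    | false => exact vchild_false_some hvl hroot hax.1 hax.2
    | true =>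
        rcases hi with h | h
        · simp at h
        · subst h; exact vchild_true_some hvl hroot (by simp)
  have hcond : i = false ∨ (π'.lab []).map Prod.fst ≠ some Rule.box := by
    rcases hi with h | h
    · exact Or.inl h
    · subst h; right; rw [hroot]; simp
  have hlab : (subtree π' i).lab = shift i π'.lab := subtree_lab π' i hsome
  have hmem : MemP 1 (subtree π' i).lab := by
    rw [hlab]
    rcases hr4 with rfl | rfl | rfl | rfl
    · cases i with
      | false => exact (memP_impL_inv hvl hm one_ne_zero hroot).1
      | true => exact (memP_impL_inv hvl hm one_ne_zero hroot).2
    · cases i with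
      | false => exact memP_un_inv hvl hm one_ne_zero (by simp) hroot
      | true => rcases hi with h | h <;> simp at h
    · cases i with
      | false => exact memP_un_inv hvl hm one_ne_zero (by simp) hroot
      | true => rcases hi with h | h <;> simp at h
    · cases i with
      | false => exact (memP_box_inv hvl hm one_ne_zero hroot).1
      | true => rcases hi with h | h <;> simp at h
  refine ⟨⟨hsome, hmem⟩, ?_⟩
  rw [hlab]
  exact height_shift_lt hvl i hsome hcond

theorem elabp_root_some (π : InfProof) : (elabp E π []).isSome := by
  rw [elabp_nil]
  exact (normp E π).root_some

theorem elabp_nojunk (hEM : ∀ π, MemP 1 (E π).lab) :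
    ∀ (a : List Bool) (π : InfProof) (i : Bool),
      elabp E π a = none → elabp E π (a ++ [i]) = none := by
  intro a
  induction a with
  | nil =>
      intro π i h
      rw [elabp_nil] at h
      have := (normp E π).root_some
      rw [h] at this
      simp at this
  | cons j a' ih =>
      intro π i h
      set π' := normp E π with hπ'
      by_cases hh : height π'.lab = 0
      · rw [elabp_copy hh] at h
        rw [elabp_copy hh]
        exact π'.nojunk (j :: a') i h
      · obtain ⟨r, s, hroot, hr4⟩ := root4 hEM π hh
        have hstep : ((j :: a') ++ [i] : List Bool) = j :: (a' ++ [i]) := rfl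
        rcases hr4 with rfl | hr4' | hr4' | rfl
        · rw [elabp_binbox hh hroot (by simp) j] at h
          rw [hstep, elabp_binbox hh hroot (by simp) j]
          exact ih (subtree π' j) i h
        · subst hr4'
          cases j with
          | true => rw [hstep]; exact elabp_unT hh hroot (by simp) _
          | false =>
              rw [elabp_unF hh hroot (by simp)] at h
              rw [hstep, elabp_unF hh hroot (by simp)]
              exact ih (subtree π' false) i h
        · subst hr4'
          cases j with
          | true => rw [hstep]; exact elabp_unT hh hroot (by simp) _
          | false =>
              rw [elabp_unF hh hroot (by simp)] at h
              rw [hstep, elabp_unF hh hroot (by simp)]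
              exact ih (subtree π' false) i h
        · rw [elabp_binbox hh hroot (by simp) j] at h
          rw [hstep, elabp_binbox hh hroot (by simp) j]
          exact ih (subtree π' j) i h

theorem elabp_child_snd (hER : RootPres E)
    (π : InfProof) (hh : height (normp E π).lab ≠ 0) {r : Rule} {s : Sequent}
    (hroot : (normp E π).lab [] = some (r, s)) (i : Bool)
    (hd : (r = .impL ∨ r = .box) ∨ (i = false ∧ (r = .impR ∨ r = .refl))) :
    (elabp E π [i]).map Prod.snd = ((normp E π).lab [i]).map Prod.snd := by
  set π' := normp E π with hπ'
  have hvl : VLab π'.lab := ⟨π', rfl⟩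
  rcases hd with hbb | hun
  · have hsome : (π'.lab [i]).isSome := by
      rcases hbb with rfl | rfl
      · cases i
        · exact vchild_false_some hvl hroot (by decide) (by decide)
        · exact vchild_true_some hvl hroot (by simp)
      · cases i
        · exact vchild_false_some hvl hroot (by decide) (by decide)
        · exact vchild_true_some hvl hroot (by simp)
    rw [elabp_binbox hh hroot hbb i [], elabp_nil, normp_snd hER, subtree_lab π' i hsome]
    rfl
  · obtain ⟨rfl, hr⟩ := hun
    have hsome : (π'.lab [false]).isSome :=
      vchild_false_some hvl hroot (by rcases hr with rfl | rfl <;> decide)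
        (by rcases hr with rfl | rfl <;> decide)
    rw [elabp_unF hh hroot hr [], elabp_nil, normp_snd hER, subtree_lab π' false hsome]
    rfl

theorem elabp_step (hEM : ∀ π, MemP 1 (E π).lab) (hER : RootPres E) :
    ∀ (a : List Bool) (π : InfProof) (r : Rule) (s : Sequent),
      elabp E π a = some (r, s) →
      Inst r s ((elabp E π (a ++ [false])).map Prod.snd)
        ((elabp E π (a ++ [true])).map Prod.snd) := by
  intro a
  induction a with
  | nil =>
      intro π r s h
      set π' := normp E π with hπ'
      rw [elabp_nil] at h
      by_cases hh : height π'.lab = 0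
      · rw [elabp_copy hh, elabp_copy hh]
        exact step_nil π' r s h
      · obtain ⟨r0, s0, hroot, hr4⟩ := root4 hEM π hh
        obtain ⟨rfl, rfl⟩ : r = r0 ∧ s = s0 := by rw [h] at hroot; simpa using hroot
        have hstep := step_nil π' r s h
        have hvl : VLab π'.lab := ⟨π', rfl⟩
        simp only [List.nil_append]
        rcases hr4 with rfl | rfl | rfl | rfl
        · rw [elabp_child_snd hER π hh h false (Or.inl (Or.inl rfl)),
            elabp_child_snd hER π hh h true (Or.inl (Or.inl rfl))]
          exact hstep
        · have htn : π'.lab [true] = none := vchild_true_none hvl h (by simp)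
          rw [htn] at hstep
          rw [elabp_child_snd hER π hh h false (Or.inr ⟨rfl, by simp⟩),
            elabp_unT hh h (by simp) []]
          exact hstep
        · have htn : π'.lab [true] = none := vchild_true_none hvl h (by simp)
          rw [htn] at hstep
          rw [elabp_child_snd hER π hh h false (Or.inr ⟨rfl, by simp⟩),
            elabp_unT hh h (by simp) []]
          exact hstep
        · rw [elabp_child_snd hER π hh h false (Or.inl (Or.inr rfl)),
            elabp_child_snd hER π hh h true (Or.inl (Or.inr rfl))]
          exact hstep
  | cons j a' ih =>
      intro π r s h
      set π' := normp E π with hπ'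
      by_cases hh : height π'.lab = 0
      · rw [elabp_copy hh] at h
        rw [elabp_copy hh, elabp_copy hh]
        exact π'.step (j :: a') r s h
      · obtain ⟨r0, s0, hroot, hr4⟩ := root4 hEM π hh
        have e1 : ((j :: a') ++ [false] : List Bool) = j :: (a' ++ [false]) := rfl
        have e2 : ((j :: a') ++ [true] : List Bool) = j :: (a' ++ [true]) := rfl
        rcases hr4 with rfl | rfl | rfl | rfl
        · rw [elabp_binbox hh hroot (by simp) j] at h
          rw [e1, e2, elabp_binbox hh hroot (by simp) j, elabp_binbox hh hroot (by simp) j]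
          exact ih (subtree π' j) r s h
        · cases j with
          | true => rw [elabp_unT hh hroot (by simp) a'] at h; simp at h
          | false =>
              rw [elabp_unF hh hroot (by simp) a'] at h
              rw [e1, e2, elabp_unF hh hroot (by simp), elabp_unF hh hroot (by simp)]
              exact ih (subtree π' false) r s h
        · cases j with
          | true => rw [elabp_unT hh hroot (by simp) a'] at h; simp at h
          | false =>
              rw [elabp_unF hh hroot (by simp) a'] at h
              rw [e1, e2, elabp_unF hh hroot (by simp), elabp_unF hh hroot (by simp)]
              exact ih (subtree π' false) r s h
        · rw [elabp_binbox hh hroot (by simp) j] at h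
          rw [e1, e2, elabp_binbox hh hroot (by simp) j, elabp_binbox hh hroot (by simp) j]
          exact ih (subtree π' j) r s h

theorem pref_succ (f : ℕ → Bool) (n : ℕ) :
    (List.range (n+1)).map f = f 0 :: (List.range n).map (fun k => f (k+1)) := by
  rw [List.range_succ_eq_map, List.map_cons, List.map_map]
  rfl

theorem pref_add (f : ℕ → Bool) (m k : ℕ) :
    (List.range (m+k)).map f =
      (List.range m).map f ++ (List.range k).map (fun j => f (m+j)) := by
  rw [List.range_add, List.map_append, List.map_map]
  rfl

theorem elabp_B1 (hEM : ∀ π, MemP 1 (E π).lab) :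
    ∀ (h : ℕ) (π : InfProof) (f : ℕ → Bool),
      height (normp E π).lab ≤ h →
      (∀ n : ℕ, (elabp E π ((List.range n).map f)).isSome) →
      ∃ (n : ℕ) (τ : InfProof), f n = true ∧
        (elabp E π ((List.range n).map f)).map Prod.fst = some Rule.box ∧
        ∀ a : List Bool, elabp E π ((List.range (n+1)).map f ++ a) = elabp E τ a := by
  intro h
  induction h with
  | zero =>
      intro π f hh hsome
      exfalso
      have hh0 : height (normp E π).lab = 0 := Nat.le_zero.mp hh
      have h1 := hsome 1
      rw [show (List.range 1).map f = [f 0] from rfl, elabp_copy hh0] at h1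
      exact height_ne_zero ⟨normp E π, rfl⟩ (f 0) h1 hh0
  | succ k ihk =>
      intro π f hh hsome
      set π' := normp E π with hπ'
      by_cases hh0 : height π'.lab = 0
      · exfalso
        have h1 := hsome 1
        rw [show (List.range 1).map f = [f 0] from rfl, elabp_copy hh0] at h1
        exact height_ne_zero ⟨π', rfl⟩ (f 0) h1 hh0
      obtain ⟨r, s, hroot, hr4⟩ := root4 hEM π hh0
      set f' : ℕ → Bool := fun n => f (n+1) with hf'
      -- the case of a (□) rule with the branch going right
      by_cases hbox : r = .box ∧ f 0 = true
      · obtain ⟨rfl, hf0⟩ := hbox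
        refine ⟨0, subtree π' true, hf0, ?_, ?_⟩
        · rw [show (List.range 0).map f = [] from rfl, elabp_nil, ← hπ', hroot]
          rfl
        · intro a
          rw [pref_succ]
          rw [show (f 0 :: (List.range 0).map f') ++ a = f 0 :: a from rfl, hf0]
          exact elabp_binbox hh0 hroot (by simp) true a
      -- otherwise descend into a main-fragment child
      · -- determine the child direction
        have hun_t : (r = .impR ∨ r = .refl) → f 0 = false := by
          intro hr
          by_contra hft
          have hft : f 0 = true := by revert hft; cases (f 0) <;> simp
          have h1 := hsome 1
          rw [show (List.range 1).map f = [f 0] from rfl, hft,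
            elabp_unT hh0 hroot hr []] at h1
          simp at h1
        set i : Bool := f 0 with hi
        have hi_ok : i = false ∨ r = .impL := by
          rcases hr4 with rfl | rfl | rfl | rfl
          · exact Or.inr rfl
          · exact Or.inl (hun_t (by simp))
          · exact Or.inl (hun_t (by simp))
          · left
            rcases hb : f 0 with _ | _
            · rw [hi, hb]
            · exact absurd ⟨rfl, hi.trans hb⟩ hbox
        have hdisp : ∀ x, elabp E π (i :: x) = elabp E (subtree π' i) x := by
          intro x
          rcases hr4 with rfl | rfl | rfl | rfl
          · exact elabp_binbox hh0 hroot (by simp) i x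
          · rcases hi_ok with hif | hif
            · rw [hif]; exact elabp_unF hh0 hroot (by simp) x
            · simp at hif
          · rcases hi_ok with hif | hif
            · rw [hif]; exact elabp_unF hh0 hroot (by simp) x
            · simp at hif
          · exact elabp_binbox hh0 hroot (by simp) i x
        obtain ⟨⟨hcs, hcm⟩, hclt⟩ := elabp_sub_facts hEM π hh0 hroot hr4 i hi_ok
        have hnorm_sub : normp E (subtree π' i) = subtree π' i := normp_of_memP1 hcm
        have hsome' : ∀ n, (elabp E (subtree π' i) ((List.range n).map f')).isSome := by
          intro n
          rw [← hdisp]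
          have := hsome (n+1)
          rw [pref_succ] at this
          exact this
        obtain ⟨n, τ, hb1, hb2, hb3⟩ := ihk (subtree π' i) f'
          (by rw [hnorm_sub]; exact Nat.lt_succ_iff.mp (lt_of_lt_of_le hclt hh)) hsome'
        refine ⟨n+1, τ, hb1, ?_, ?_⟩
        · rw [pref_succ, hdisp]
          exact hb2
        · intro a
          rw [pref_succ f (n+1)]
          rw [show (f 0 :: (List.range (n+1)).map f') ++ a
              = f 0 :: ((List.range (n+1)).map f' ++ a) from rfl]
          rw [hdisp]
          exact hb3 a

theorem elabp_branch (hEM : ∀ π, MemP 1 (E π).lab) :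
    ∀ (N : ℕ) (π : InfProof) (f : ℕ → Bool),
      (∀ n : ℕ, (elabp E π ((List.range n).map f)).isSome) →
      ∃ n : ℕ, N ≤ n ∧ f n = true ∧
        (elabp E π ((List.range n).map f)).map Prod.fst = some Rule.box := by
  intro N
  induction N with
  | zero =>
      intro π f hsome
      obtain ⟨n, τ, h1, h2, h3⟩ := elabp_B1 hEM (height (normp E π).lab) π f le_rfl hsome
      exact ⟨n, Nat.zero_le n, h1, h2⟩
  | succ N ihN =>
      intro π f hsome
      obtain ⟨n0, τ, h1, h2, h3⟩ := elabp_B1 hEM (height (normp E π).lab) π f le_rfl hsome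
      set f' : ℕ → Bool := fun k => f (n0+1+k) with hf'
      have hsplit : ∀ k, (List.range (n0+1+k)).map f
          = (List.range (n0+1)).map f ++ (List.range k).map f' :=
        fun k => pref_add f (n0+1) k
      have hsome' : ∀ k, (elabp E τ ((List.range k).map f')).isSome := by
        intro k
        rw [← h3]
        rw [← hsplit]
        exact hsome (n0+1+k)
      obtain ⟨m, hm, hft, hbox⟩ := ihN τ f' hsome'
      refine ⟨n0+1+m, by omega, hft, ?_⟩
      rw [hsplit m, h3]
      exact hbox

noncomputable def Eop (E : InfProof → InfProof) (hER : RootPres E)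
    (hEM : ∀ π, MemP 1 (E π).lab) : InfProof → InfProof := fun π =>
  { lab := elabp E π
    root_some := elabp_root_some π
    nojunk := fun a i h => elabp_nojunk hEM a π i h
    step := fun a r s h => elabp_step hEM hER a π r s h
    branch := fun f hf N => elabp_branch hEM N π f hf }

variable {F : (InfProof → InfProof) → InfProof → InfProof}

theorem Eop_lab (hER : RootPres E) (hEM : ∀ π, MemP 1 (E π).lab) (π : InfProof) :
    (Eop E hER hEM π).lab = elabp E π := rfl

theorem Eop_rootPres (hER : RootPres E) (hEM : ∀ π, MemP 1 (E π).lab) :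
    RootPres (Eop E hER hEM) := by
  intro π S hp
  obtain ⟨r, hroot⟩ := hp
  have hsnd : ((normp E π).lab []).map Prod.snd = some S := by
    rw [normp_snd hER, hroot]; rfl
  obtain ⟨r', h'⟩ := snd_eq_some hsnd
  exact ⟨r', by rw [Eop_lab, elabp_nil]; exact h'⟩

theorem FEop_lab (hF : IsFOp E F) (hER : RootPres E) (hEM : ∀ π, MemP 1 (E π).lab) :
    ∀ (a : List Bool) (π : InfProof), MemP 1 π.lab →
      (F (Eop E hER hEM) π).lab a = elabp E π a := by
  intro a
  induction a with
  | nil =>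
      intro π hm
      have hnp : normp E π = π := normp_of_memP1 hm
      rw [elabp_nil, hnp]
      by_cases hh : height π.lab = 0
      · rw [(hF _ π).1 hm hh]
      · obtain ⟨r, s, hroot, hr4⟩ := root4 hEM π (by rw [hnp]; exact hh)
        rw [hnp] at hroot
        rcases hr4 with rfl | rfl | rfl | rfl
        · rw [((hF _ π).2.1 _ s hm hroot (by decide) (by decide) hh).1, hroot]
        · rw [((hF _ π).2.1 _ s hm hroot (by decide) (by decide) hh).1, hroot]
        · rw [((hF _ π).2.1 _ s hm hroot (by decide) (by decide) hh).1, hroot]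
        · rw [((hF _ π).2.2.1 s hm hroot).1, hroot]
  | cons i a' ih =>
      intro π hm
      have hnp : normp E π = π := normp_of_memP1 hm
      by_cases hh : height π.lab = 0
      · rw [(hF _ π).1 hm hh, elabp_copy (by rw [hnp]; exact hh), hnp]
      · have hh' : height (normp E π).lab ≠ 0 := by rw [hnp]; exact hh
        obtain ⟨r, s, hroot, hr4⟩ := root4 hEM π hh'
        have hroot' : π.lab [] = some (r, s) := by rw [← hnp]; exact hroot
        have hsubeq : ∀ j : Bool, subtree (normp E π) j = subtree π j := by
          intro j; rw [hnp]
        rcases hr4 with rfl | rfl | rfl | rfl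
        · -- impL
          obtain ⟨hr0, hsf, hst⟩ :=
            (hF _ π).2.1 .impL s hm hroot' (by decide) (by decide) hh
          have hsub := elabp_sub_facts hEM π hh' hroot (by simp) i (Or.inr rfl)
          have hmem : MemP 1 (subtree π i).lab := by rw [← hsubeq]; exact hsub.1.2
          have l3 : elabp E π (i :: a') = elabp E (subtree π i) a' := by
            rw [elabp_binbox hh' hroot (by simp) i a', hsubeq]
          cases i with
          | false =>
              have l1 : (F (Eop E hER hEM) π).lab (false :: a')
                  = (F (Eop E hER hEM) (subtree π false)).lab a' := congrFun hsf a'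
              rw [l1, ih (subtree π false) hmem, l3]
          | true =>
              have l1 : (F (Eop E hER hEM) π).lab (true :: a')
                  = (F (Eop E hER hEM) (subtree π true)).lab a' := congrFun (hst rfl) a'
              rw [l1, ih (subtree π true) hmem, l3]
        · -- impR
          obtain ⟨hr0, hsf, -⟩ :=
            (hF _ π).2.1 .impR s hm hroot' (by decide) (by decide) hh
          cases i with
          | false =>
              have hsub := elabp_sub_facts hEM π hh' hroot (by simp) false (Or.inl rfl)
              have hmem : MemP 1 (subtree π false).lab := by rw [← hsubeq]; exact hsub.1.2
              have l1 : (F (Eop E hER hEM) π).lab (false :: a')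
                  = (F (Eop E hER hEM) (subtree π false)).lab a' := congrFun hsf a'
              rw [l1, ih (subtree π false) hmem,
                elabp_unF hh' hroot (by simp) a', hsubeq]
          | true =>
              rw [elabp_unT hh' hroot (by simp) a']
              have htn : (F (Eop E hER hEM) π).lab [true] = none :=
                child_true_none _ _ s hr0 (by simp)
              have := lab_none_append (F (Eop E hER hEM) π) a' [true] htn
              rw [show ([true] ++ a' : List Bool) = true :: a' from rfl] at this
              exact this
        · -- refl
          obtain ⟨hr0, hsf, -⟩ :=
            (hF _ π).2.1 .refl s hm hroot' (by decide) (by decide) hh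
          cases i with
          | false =>
              have hsub := elabp_sub_facts hEM π hh' hroot (by simp) false (Or.inl rfl)
              have hmem : MemP 1 (subtree π false).lab := by rw [← hsubeq]; exact hsub.1.2
              have l1 : (F (Eop E hER hEM) π).lab (false :: a')
                  = (F (Eop E hER hEM) (subtree π false)).lab a' := congrFun hsf a'
              rw [l1, ih (subtree π false) hmem,
                elabp_unF hh' hroot (by simp) a', hsubeq]
          | true =>
              rw [elabp_unT hh' hroot (by simp) a']
              have htn : (F (Eop E hER hEM) π).lab [true] = none :=
                child_true_none _ _ s hr0 (by simp)
              have := lab_none_append (F (Eop E hER hEM) π) a' [true] htn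
              rw [show ([true] ++ a' : List Bool) = true :: a' from rfl] at this
              exact this
        · -- box
          obtain ⟨hr0, hsf, hst⟩ := (hF _ π).2.2.1 s hm hroot'
          have l3 : elabp E π (i :: a') = elabp E (subtree π i) a' := by
            rw [elabp_binbox hh' hroot (by simp) i a', hsubeq]
          cases i with
          | false =>
              have hsub := elabp_sub_facts hEM π hh' hroot (by simp) false (Or.inl rfl)
              have hmem : MemP 1 (subtree π false).lab := by rw [← hsubeq]; exact hsub.1.2
              have l1 : (F (Eop E hER hEM) π).lab (false :: a')
                  = (F (Eop E hER hEM) (subtree π false)).lab a' := congrFun hsf a'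
              rw [l1, ih (subtree π false) hmem, l3]
          | true =>
              have l1 : (F (Eop E hER hEM) π).lab (true :: a')
                  = (Eop E hER hEM (subtree π true)).lab a' := congrFun hst a'
              rw [l1, l3]
              rfl

theorem FEop_eq (hF : IsFOp E F) (hER : RootPres E) (hEM : ∀ π, MemP 1 (E π).lab) :
    F (Eop E hER hEM) = Eop E hER hEM := by
  funext π
  apply InfProof.ext'
  funext a
  show (F (Eop E hER hEM) π).lab a = elabp E π a
  by_cases hm : MemP 1 π.lab
  · exact FEop_lab hF hER hEM a π hm
  · rw [(hF _ π).2.2.2 hm, FEop_lab hF hER hEM a (E π) (hEM π)]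
    exact elabp_congr (by rw [normp_of_memP1 (hEM π), normp_of_not hm]) a

theorem Eop_nonexpansive (hF : IsFOp E F) (hEN : Nonexpansive E) (hER : RootPres E)
    (hEM : ∀ π, MemP 1 (E π).lab) : Nonexpansive (Eop E hER hEM) := by
  have hfix := FEop_eq hF hER hEM
  intro n
  induction n using Nat.strong_induction_on with
  | _ n ihn =>
    intro π τ h
    match n, h, ihn with
    | 0, h, _ => exact .zero _ _
    | (k+1), h, ihn =>
      have hUsnd : ∀ ρ : InfProof,
          ((Eop E hER hEM ρ).lab []).map Prod.snd = (ρ.lab []).map Prod.snd := fun ρ => by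
        rw [Eop_lab, elabp_nil]
        exact normp_snd hER ρ
      have hU : ∀ j, j < k+1 → ∀ ρ σ : InfProof, Sim j ρ.lab σ.lab →
          Sim j (Eop E hER hEM ρ).lab (Eop E hER hEM σ).lab := fun j hj => ihn j hj
      have hgoal : Sim (k+1) (F (Eop E hER hEM) π).lab (F (Eop E hER hEM) τ).lab := by
        by_cases h1 : MemP 1 π.lab <;> by_cases h2 : MemP 1 τ.lab
        · exact FU_sim hF _ hUsnd h hU π τ rfl rfl h1 h2
        · exact absurd (sim_memP1 h (Nat.succ_ne_zero k) ⟨π, rfl⟩ ⟨τ, rfl⟩ h1) h2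
        · exact absurd (sim_memP1 (sim_symm h) (Nat.succ_ne_zero k) ⟨τ, rfl⟩ ⟨π, rfl⟩ h2) h1
        · rw [(hF _ π).2.2.2 h1, (hF _ τ).2.2.2 h2]
          exact FU_sim hF _ hUsnd (hEN (k+1) π τ h) hU (E π) (E τ) rfl rfl (hEM π) (hEM τ)
      rwa [hfix] at hgoal

end EFixed

end CutElimAux





/-- 𝒰 ∈ 𝒩ₙ implies ℱ(𝒰) ∈ 𝒩ₙ₊₁; consequently the fixed point ℰ of ℱ
belongs to every 𝒩ₙ, i.e. it maps every ∞-proof of Grz∞ + cut to a cut-free ∞-proof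
of the same sequent. -/
theorem F_raises_and_fixed_point (E : InfProof → InfProof)
    (hE : Nonexpansive E ∧ RootPres E ∧ ∀ π : InfProof, MemP 1 (E π).lab)
    (F : (InfProof → InfProof) → InfProof → InfProof) (hF : IsFOp E F) :
    (∀ (n : ℕ) (U : InfProof → InfProof), InN n U → InN (n + 1) (F U)) ∧
    ∃ Eop : InfProof → InfProof, Nonexpansive Eop ∧ RootPres Eop ∧ F Eop = Eop ∧
      (∀ n : ℕ, InN n Eop) ∧
      ∀ (π : InfProof) (S : Sequent), Proves π S → NoCut (Eop π) ∧ Proves (Eop π) S := by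
  obtain ⟨hEN, hER, hEM⟩ := hE
  have hpartA := CutElimAux.part_A hF hEN hER hEM
  refine ⟨hpartA, CutElimAux.Eop E hER hEM, CutElimAux.Eop_nonexpansive hF hEN hER hEM,
    CutElimAux.Eop_rootPres hER hEM, CutElimAux.FEop_eq hF hER hEM, ?_⟩
  have hInN : ∀ n : ℕ, InN n (CutElimAux.Eop E hER hEM) := by
    intro n
    induction n with
    | zero =>
        exact ⟨CutElimAux.Eop_nonexpansive hF hEN hER hEM,
          CutElimAux.Eop_rootPres hER hEM, fun π => MemP.zero _⟩
    | succ n ihn =>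
        have := hpartA n _ ihn
        rwa [CutElimAux.FEop_eq hF hER hEM] at this
  refine ⟨hInN, ?_⟩
  intro π S hp
  constructor
  · intro a r s h hrc
    subst hrc
    exact CutElimAux.memP_no_cut a (CutElimAux.Eop E hER hEM π).lab
      ⟨CutElimAux.Eop E hER hEM π, rfl⟩ ((hInN (a.count true + 1)).2.2 π) s h
  · exact CutElimAux.Eop_rootPres hER hEM π S hp
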